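/- Let S ⊂ ℝⁿ be a set whose Aikawa dimension is strictly less than n, i.e. there exist t < n and C > 0 with ∫_{B(x,r)} dist(y,S)^{t−n} dy ≤ C r^t for all x ∈ S and 0 < r ≤ 1. Then S is porous: there exists κ ≥ 1 such that for every cube Q(x,r) with 0 < r ≤ 1 there is y ∈ Q(x,r) with Q(y, r/κ) ∩ S = ∅. -/

import Mathlib

open MeasureTheory Metric Set
open scoped ENNReal

noncomputable section

/-- The closed axis-parallel cube with center `c` and half side length `r`. -/
def cube (n : ℕ) (c : EuclideanSpace ℝ (Fin n)) (r : ℝ) : Set (EuclideanSpace ℝ (Fin n)) :=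
  {y | ∀ i, |y i - c i| ≤ r}

lemma cube_measurableSet (n : ℕ) (c : EuclideanSpace ℝ (Fin n)) (r : ℝ) :
    MeasurableSet (cube n c r) := by
  have : cube n c r = ⋂ i, (fun y : EuclideanSpace ℝ (Fin n) => |y i - c i|) ⁻¹' (Iic r) := by
    ext y; simp [cube, Set.mem_iInter]
  rw [this]
  exact MeasurableSet.iInter fun i =>
    measurableSet_Iic.preimage (by fun_prop : Continuous (fun y : EuclideanSpace ℝ (Fin n) => |y i - c i|)).measurable

lemma dist_le_of_mem_cube {n : ℕ} {c y : EuclideanSpace ℝ (Fin n)} {r : ℝ}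
    (hr : 0 ≤ r) (hy : y ∈ cube n c r) : dist y c ≤ n * r := by
  rw [EuclideanSpace.dist_eq]
  have h1 : ∑ i, dist (y i) (c i) ^ 2 ≤ (n : ℝ) * r ^ 2 := by
    calc ∑ i, dist (y i) (c i) ^ 2 ≤ ∑ _i : Fin n, r ^ 2 := by
          refine Finset.sum_le_sum fun i _ => ?_
          have := hy i
          rw [Real.dist_eq]
          nlinarith [abs_nonneg (y i - c i)]
      _ = (n : ℝ) * r ^ 2 := by simp [mul_comm]
  have h2 : (n : ℝ) * r ^ 2 ≤ ((n : ℝ) * r) ^ 2 := by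
    have h3 : (n : ℝ) ≤ (n : ℝ) ^ 2 := by
      have : n ≤ n ^ 2 := Nat.le_self_pow (by norm_num) n
      exact_mod_cast this
    nlinarith [sq_nonneg r]
  calc Real.sqrt (∑ i, dist (y i) (c i) ^ 2) ≤ Real.sqrt (((n:ℝ) * r) ^ 2) :=
        Real.sqrt_le_sqrt (h1.trans h2)
    _ = (n : ℝ) * r := by
        rw [Real.sqrt_sq (by positivity)]

lemma ball_subset_cube {n : ℕ} (c : EuclideanSpace ℝ (Fin n)) (r : ℝ) :
    ball c r ⊆ cube n c r := by
  intro y hy i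
  have h1 : |y i - c i| = Real.sqrt (dist (y i) (c i) ^ 2) := by
    rw [Real.dist_eq, sq_abs, Real.sqrt_sq_eq_abs]
  have h2 : dist (y i) (c i) ^ 2 ≤ ∑ j, dist (y j) (c j) ^ 2 :=
    Finset.single_le_sum (f := fun j => dist (y j) (c j) ^ 2)
      (fun j _ => sq_nonneg _) (Finset.mem_univ i)
  have h3 : Real.sqrt (∑ j, dist (y j) (c j) ^ 2) = dist y c := (EuclideanSpace.dist_eq y c).symm
  calc |y i - c i| ≤ Real.sqrt (∑ j, dist (y j) (c j) ^ 2) := by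
        rw [h1]; exact Real.sqrt_le_sqrt h2
    _ = dist y c := h3
    _ ≤ r := le_of_lt (mem_ball.1 hy)

lemma ennreal_rpow_anti {a b : ℝ≥0∞} {c : ℝ} (hc : c ≤ 0) (hab : a ≤ b) : b ^ c ≤ a ^ c := by
  calc b ^ c = (b ^ (-c))⁻¹ := by rw [← ENNReal.rpow_neg, neg_neg]
    _ ≤ (a ^ (-c))⁻¹ := ENNReal.inv_le_inv.2 (ENNReal.rpow_le_rpow hab (neg_nonneg.2 hc))
    _ = a ^ c := by rw [← ENNReal.rpow_neg, neg_neg]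

theorem stmt15 (n : ℕ) (S : Set (EuclideanSpace ℝ (Fin n))) (t C : ℝ)
    (htn : t < n) (hC : 0 < C)
    (h : ∀ x ∈ S, ∀ r : ℝ, 0 < r → r ≤ 1 →
      ∫⁻ y in ball x r, (ENNReal.ofReal (infDist y S)) ^ (t - (n : ℝ)) ≤
        ENNReal.ofReal (C * r ^ t)) :
    ∃ κ : ℝ, 1 ≤ κ ∧ ∀ (x : EuclideanSpace ℝ (Fin n)) (r : ℝ), 0 < r → r ≤ 1 →
      ∃ y ∈ cube n x r, cube n y (r / κ) ∩ S = ∅ := by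
  rcases Nat.eq_zero_or_pos n with hn0 | hn1
  · -- dimension 0 : S must be empty
    subst hn0
    have hS : S = ∅ := by
      by_contra hS
      obtain ⟨x, hx⟩ := Set.nonempty_iff_ne_empty.2 hS
      have h1 := h x hx 1 one_pos le_rfl
      have hyx : ∀ y : EuclideanSpace ℝ (Fin 0), y = x := fun y => by ext i; exact Fin.elim0 i
      have hint : ∀ y : EuclideanSpace ℝ (Fin 0),
          (ENNReal.ofReal (infDist y S)) ^ (t - ((0:ℕ) : ℝ)) = ⊤ := by
        intro y
        rw [hyx y, infDist_zero_of_mem hx]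
        simp only [ENNReal.ofReal_zero]
        have ht0 : t < 0 := by simpa using htn
        exact ENNReal.zero_rpow_of_neg (by simpa using ht0)
      rw [show (fun y : EuclideanSpace ℝ (Fin 0) =>
          (ENNReal.ofReal (infDist y S)) ^ (t - ((0:ℕ) : ℝ))) = fun _ => ⊤ from funext hint] at h1
      rw [setLIntegral_const] at h1
      rw [ENNReal.top_mul (measure_ball_pos volume x one_pos).ne'] at h1
      exact ENNReal.ofReal_ne_top (top_le_iff.1 h1)
    refine ⟨1, le_rfl, fun x r hr _ => ⟨x, fun i => by simpa using hr.le, by simp [hS]⟩⟩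
  · have hn1' : (1:ℝ) ≤ (n:ℝ) := by exact_mod_cast hn1
    set N : ℝ := (n : ℝ) with hN
    have hNt : 0 < N - t := by linarith
    set B : ℝ≥0∞ := volume (ball (0 : EuclideanSpace ℝ (Fin n)) 1) with hB
    have hB0 : B ≠ 0 := (measure_ball_pos volume 0 one_pos).ne'
    have hBtop : B ≠ ⊤ := measure_ball_lt_top.ne
    set b : ℝ := B.toReal with hb
    have hbpos : 0 < b := ENNReal.toReal_pos hB0 hBtop
    set D : ℝ := C * (2*N)^n * N^(N - t) / b with hD
    have hDpos : 0 < D := by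
      have := Real.rpow_pos_of_pos (show (0:ℝ) < N by linarith) (N - t)
      positivity
    set κ : ℝ := max 2 ((D + 1) ^ ((N - t)⁻¹)) with hκ
    have hκ2 : (2:ℝ) ≤ κ := le_max_left _ _
    have hκpos : 0 < κ := lt_of_lt_of_le two_pos hκ2
    have hκD : D < κ ^ (N - t) := by
      have h1 : ((D + 1) ^ ((N - t)⁻¹)) ^ (N - t) ≤ κ ^ (N - t) :=
        Real.rpow_le_rpow (Real.rpow_nonneg (by linarith) _) (le_max_right _ _) hNt.le
      have h2 : ((D + 1) ^ ((N - t)⁻¹)) ^ (N - t) = D + 1 := by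
        rw [← Real.rpow_mul (by linarith), inv_mul_cancel₀ hNt.ne', Real.rpow_one]
      linarith [h2 ▸ h1]
    refine ⟨κ, by linarith, fun x r hr hr1 => ?_⟩
    by_cases hc : cube n x (r/κ) ∩ S = ∅
    · exact ⟨x, fun i => by simpa using hr.le, hc⟩
    obtain ⟨x', hx'c, hx'S⟩ := Set.nonempty_iff_ne_empty.2 hc
    set ρ : ℝ := r / (2*N) with hρ
    have hρpos : 0 < ρ := by positivity
    by_contra hcon
    push_neg at hcon
    have hρr : ρ ≤ r/2 := by
      rw [hρ]
      apply div_le_div_of_nonneg_left hr.le two_pos (by linarith)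
    have hκr : r/κ ≤ r/2 := div_le_div_of_nonneg_left hr.le two_pos hκ2
    have hsub2 : cube n x' ρ ⊆ cube n x r := by
      intro y hy i
      have h1 := hy i
      have h2 := hx'c i
      calc |y i - x i| ≤ |y i - x' i| + |x' i - x i| := abs_sub_le _ _ _
        _ ≤ ρ + r/κ := add_le_add h1 h2
        _ ≤ r := by linarith
    have hsub1 : cube n x' ρ ⊆ ball x' r := by
      intro y hy
      rw [mem_ball]
      have hd := dist_le_of_mem_cube hρpos.le hy
      have hNρ : N * ρ = r / 2 := by
        rw [hρ]; field_simp
      calc dist y x' ≤ N * ρ := hd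
        _ = r/2 := hNρ
        _ < r := by linarith
    have hpt : ∀ y ∈ cube n x' ρ,
        (ENNReal.ofReal (N * r / κ)) ^ (t - N) ≤ (ENNReal.ofReal (infDist y S)) ^ (t - N) := by
      intro y hy
      obtain ⟨s, hsy, hsS⟩ := hcon y (hsub2 hy)
      have hds : dist s y ≤ N * (r/κ) := dist_le_of_mem_cube (by positivity) hsy
      have hinf : infDist y S ≤ N * r / κ := by
        calc infDist y S ≤ dist y s := infDist_le_dist_of_mem hsS
          _ = dist s y := (dist_comm y s)
          _ ≤ N * (r/κ) := hds
          _ = N * r / κ := by ring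
      exact ennreal_rpow_anti (by linarith) (ENNReal.ofReal_le_ofReal hinf)
    have hchain : (ENNReal.ofReal (N * r / κ)) ^ (t - N) * volume (cube n x' ρ)
        ≤ ENNReal.ofReal (C * r ^ t) := by
      calc (ENNReal.ofReal (N * r / κ)) ^ (t - N) * volume (cube n x' ρ)
          = ∫⁻ _ in cube n x' ρ, (ENNReal.ofReal (N * r / κ)) ^ (t - N) :=
            (setLIntegral_const _ _).symm
        _ ≤ ∫⁻ y in cube n x' ρ, (ENNReal.ofReal (infDist y S)) ^ (t - N) :=
            setLIntegral_mono' (cube_measurableSet n x' ρ) hpt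
        _ ≤ ∫⁻ y in ball x' r, (ENNReal.ofReal (infDist y S)) ^ (t - N) :=
            lintegral_mono_set hsub1
        _ ≤ ENNReal.ofReal (C * r ^ t) := h x' hx'S r hr hr1
    have hvol : ENNReal.ofReal (ρ ^ n) * B ≤ volume (cube n x' ρ) := by
      have h1 : volume (ball x' ρ)
          = ENNReal.ofReal (ρ ^ Module.finrank ℝ (EuclideanSpace ℝ (Fin n))) * B :=
        Measure.addHaar_ball_of_pos volume x' hρpos
      rw [finrank_euclideanSpace_fin] at h1
      rw [← h1]
      exact measure_mono (ball_subset_cube x' ρ)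
    have h0 : (0:ℝ) < N * r / κ := by positivity
    have hkey : ENNReal.ofReal ((N * r / κ) ^ (t - N) * ρ ^ n) * B
        ≤ ENNReal.ofReal (C * r ^ t) := by
      calc ENNReal.ofReal ((N * r / κ) ^ (t - N) * ρ ^ n) * B
          = (ENNReal.ofReal (N * r / κ)) ^ (t - N) * (ENNReal.ofReal (ρ ^ n) * B) := by
            rw [ENNReal.ofReal_mul (Real.rpow_nonneg h0.le _), ENNReal.ofReal_rpow_of_pos h0,
              mul_assoc]
        _ ≤ (ENNReal.ofReal (N * r / κ)) ^ (t - N) * volume (cube n x' ρ) :=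
            mul_le_mul_right hvol _
        _ ≤ ENNReal.ofReal (C * r ^ t) := hchain
    have hreal : (N * r / κ) ^ (t - N) * ρ ^ n * b ≤ C * r ^ t := by
      have h1 := ENNReal.toReal_mono ENNReal.ofReal_ne_top hkey
      rw [ENNReal.toReal_mul, ENNReal.toReal_ofReal (by positivity),
        ENNReal.toReal_ofReal (by positivity)] at h1
      exact h1
    set a : ℝ := N * r / κ with ha
    have hA : 0 < a ^ (N - t) := Real.rpow_pos_of_pos h0 _
    have hone : a ^ (t - N) * a ^ (N - t) = 1 := by
      rw [← Real.rpow_add h0]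
      norm_num
    have h2 : ρ ^ n * b ≤ C * r ^ t * a ^ (N - t) := by
      calc ρ ^ n * b = (a ^ (t - N) * a ^ (N - t)) * (ρ ^ n * b) := by rw [hone, one_mul]
        _ = (a ^ (t - N) * ρ ^ n * b) * a ^ (N - t) := by ring
        _ ≤ (C * r ^ t) * a ^ (N - t) := mul_le_mul_of_nonneg_right hreal hA.le
    have hexp : a ^ (N - t) = N ^ (N - t) * r ^ (N - t) / κ ^ (N - t) := by
      rw [ha, Real.div_rpow (by positivity) hκpos.le, Real.mul_rpow (by linarith) hr.le]
    have hrn : ρ ^ n = r ^ n / (2*N) ^ n := by rw [hρ, div_pow]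
    have hrt : r ^ t * r ^ (N - t) = r ^ n := by
      rw [← Real.rpow_add hr]
      have : t + (N - t) = N := by ring
      rw [this, hN, Real.rpow_natCast]
    have hKpos : 0 < κ ^ (N - t) := Real.rpow_pos_of_pos hκpos _
    have hMpos : 0 < N ^ (N - t) := Real.rpow_pos_of_pos (by linarith) _
    have h2Npos : 0 < (2*N)^n := by positivity
    have hrnpos : 0 < r ^ n := by positivity
    have h3 : r ^ n / (2*N) ^ n * b ≤ C * N ^ (N-t) * r ^ n / κ ^ (N - t) := by
      calc r ^ n / (2*N) ^ n * b ≤ C * r ^ t * (N ^ (N-t) * r ^ (N-t) / κ ^ (N-t)) := by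
            rw [← hexp, ← hrn]; exact h2
        _ = C * N ^ (N-t) * (r ^ t * r ^ (N-t)) / κ ^ (N-t) := by ring
        _ = C * N ^ (N-t) * r ^ n / κ ^ (N-t) := by rw [hrt]
    have hfinal : κ ^ (N - t) ≤ D := by
      rw [div_mul_eq_mul_div, div_le_div_iff₀ h2Npos hKpos] at h3
      rw [hD, le_div_iff₀ hbpos]
      nlinarith [h3, hrnpos, hKpos, hbpos, hMpos, h2Npos]
    exact absurd hfinal (not_le.2 hκD)
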